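/- Let G = G(d,e,k) be a group of squarefree order, with z = gcd(e,k−1), g = e/z, and let θ and φ_s (for s ∈ U(e)) be the automorphisms of G determined by θ(σ) = σ, θ(τ) = σ^z τ and φ_s(σ) = σ^s, φ_s(τ) = τ. Let x = [σ^a τ, θ^c φ_s] ∈ Hol(G) = G ⋊ Aut(G). Then for every j ≥ 0, x^j = [σ^{A(j)} τ^j, θ^{c·S(s,j)} φ_{s^j}], where A(j) = a·S(sk,j) + c·z·k·T(k,s,j), S(h,j) = ∑_{i=0}^{j−1} h^i, and T(k,s,j) = ∑_{h=0}^{j−1} S(s,h)·k^{h−1} for j ≥ 1 with T(k,s,0) = 0. -/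

import Mathlib

/-- The holomorph `Hol(G) = G ⋊ Aut(G)`, with multiplication
`[α,ψ][α',ψ'] = [α·ψ(α'), ψψ']`. -/
abbrev Hol (G : Type*) [Group G] : Type _ :=
  SemidirectProduct G (MulAut G) (MonoidHom.id (MulAut G))

/-- `S(h,j) = ∑_{i=0}^{j-1} h^i` (so `S(h,0) = 0`). -/
def Ssum (h : ℕ) (j : ℕ) : ℕ := ∑ i ∈ Finset.range j, h ^ i

/-- `T(k,s,j) = ∑_{h=0}^{j-1} S(s,h)·k^{h-1}` (so `T(k,s,0) = T(k,s,1) = 0`; the term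
`h = 0` vanishes since `S(s,0) = 0`, so truncated subtraction in the exponent is harmless). -/
def Tsum (k s : ℕ) (j : ℕ) : ℕ := ∑ h ∈ Finset.range j, Ssum s h * k ^ (h - 1)

lemma Ssum_succ (h j : ℕ) : Ssum h (j + 1) = Ssum h j + h ^ j :=
  Finset.sum_range_succ _ _

lemma Tsum_succ (k s j : ℕ) : Tsum k s (j + 1) = Tsum k s j + Ssum s j * k ^ (j - 1) :=
  Finset.sum_range_succ _ _

lemma Ssum_zero (h : ℕ) : Ssum h 0 = 0 := rfl
lemma Tsum_zero (k s : ℕ) : Tsum k s 0 = 0 := rfl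

/-- **Lemma (powers in the holomorph).** Let `G = G(d,e,k)` with `z = gcd(e,k-1)`,
`g = e/z`, let `θ` and `φ_u` (`u ∈ U(e)`, with representative `s = u.val`) be the
automorphisms with `θ(σ) = σ`, `θ(τ) = σ^z τ`, `φ_u(σ) = σ^s`, `φ_u(τ) = τ`, and let
`x = [σ^a τ, θ^c φ_u] ∈ Hol(G)`. Then for all `j ≥ 0`,
`x^j = [σ^{A(j)} τ^j, θ^{c·S(s,j)} φ_{u^j}]` where `A(j) = a·S(sk,j) + c·z·k·T(k,s,j)`. -/
theorem x_pow_formula (d e k : ℕ) (hd : 0 < d) (he : 0 < e) (hk : 0 < k)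
    (hcop : Nat.Coprime d e) (hord : orderOf (k : ZMod e) = d)
    (hsf : Squarefree (d * e))
    (G : Type) [Group G] (σ τ : G)
    (hσ : orderOf σ = e) (hτ : orderOf τ = d)
    (hrel : τ * σ * τ⁻¹ = σ ^ k) (hgen : Subgroup.closure {σ, τ} = ⊤)
    (z g : ℕ) (hz : z = Nat.gcd e (k - 1)) (hg : g = e / z)
    (θ : MulAut G) (hθσ : θ σ = σ) (hθτ : θ τ = σ ^ z * τ)
    (Φ : (ZMod e)ˣ → MulAut G)
    (hΦ : ∀ u : (ZMod e)ˣ, Φ u σ = σ ^ ((u : ZMod e)).val ∧ Φ u τ = τ)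
    (a c : ℕ) (u : (ZMod e)ˣ) (s : ℕ) (hs : s = ((u : ZMod e)).val)
    (x : Hol G) (hx : x = ⟨σ ^ a * τ, θ ^ c * Φ u⟩) :
    ∀ j : ℕ,
      x ^ j = ⟨σ ^ (a * Ssum (s * k) j + c * z * k * Tsum k s j) * τ ^ j,
        θ ^ (c * Ssum s j) * Φ (u ^ j)⟩ := by
  haveI : NeZero e := ⟨he.ne'⟩
  -- extensionality for automorphisms, via the generating set
  have autext : ∀ ψ ψ' : MulAut G, ψ σ = ψ' σ → ψ τ = ψ' τ → ψ = ψ' := by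
    intro ψ ψ' h1 h2
    have h : ψ.toMonoidHom = ψ'.toMonoidHom := by
      refine MonoidHom.eq_of_eqOn_dense hgen ?_
      intro w hw
      rcases hw with rfl | rfl
      · exact h1
      · exact h2
    ext w
    exact DFunLike.congr_fun h w
  -- congruent exponents of σ give equal powers
  have hσpow : ∀ m n : ℕ, ((m : ZMod e) = (n : ZMod e)) → σ ^ m = σ ^ n := by
    intro m n h
    rw [pow_eq_pow_iff_modEq, hσ]
    exact (ZMod.natCast_eq_natCast_iff m n e).mp h
  -- values of powers of u
  have hvcast : ∀ j : ℕ, ((((u : ZMod e)) ^ j).val : ZMod e) = (s : ZMod e) ^ j := by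
    intro j
    rw [ZMod.natCast_val, ZMod.cast_id, hs, ZMod.natCast_val, ZMod.cast_id]
  -- powers of θ
  have hθpσ : ∀ m : ℕ, (θ ^ m) σ = σ := by
    intro m
    induction m with
    | zero => rfl
    | succ n ih => rw [pow_succ, MulAut.mul_apply, hθσ, ih]
  have hθpτ : ∀ m : ℕ, (θ ^ m) τ = σ ^ (z * m) * τ := by
    intro m
    induction m with
    | zero => simp
    | succ n ih =>
      rw [pow_succ, MulAut.mul_apply, hθτ, map_mul, map_pow, hθpσ, ih, ← mul_assoc,
        ← pow_add]
      ring_nf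
  have hθpσpow : ∀ m n : ℕ, (θ ^ m) (σ ^ n) = σ ^ n := by
    intro m n; rw [map_pow, hθpσ]
  -- Φ on powers of σ
  have hΦσpow : ∀ (v : (ZMod e)ˣ) (n : ℕ), Φ v (σ ^ n) = σ ^ (((v : ZMod e)).val * n) := by
    intro v n
    rw [map_pow, (hΦ v).1, ← pow_mul, mul_comm]
  -- commutation of τ with powers of σ
  have hτσ : ∀ B : ℕ, τ * σ ^ B = σ ^ (k * B) * τ := by
    intro B
    have h1 : τ * σ ^ B * τ⁻¹ = σ ^ (k * B) := by
      rw [← conj_pow, hrel, ← pow_mul]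
    calc τ * σ ^ B = (τ * σ ^ B * τ⁻¹) * τ := by group
    _ = σ ^ (k * B) * τ := by rw [h1]
  have hτjσ : ∀ (j B : ℕ), τ ^ j * σ ^ B = σ ^ (k ^ j * B) * τ ^ j := by
    intro j
    induction j with
    | zero => intro B; simp
    | succ n ih =>
      intro B
      calc τ ^ (n + 1) * σ ^ B = τ ^ n * (τ * σ ^ B) := by rw [pow_succ, mul_assoc]
      _ = τ ^ n * σ ^ (k * B) * τ := by rw [hτσ, mul_assoc]
      _ = σ ^ (k ^ n * (k * B)) * τ ^ n * τ := by rw [ih]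
      _ = σ ^ (k ^ (n + 1) * B) * τ ^ (n + 1) := by
          rw [mul_assoc, ← pow_succ]
          congr 2
          ring
  -- the key natural-number identity for the left exponent
  have hkey : ∀ j : ℕ,
      a * Ssum (s * k) j + c * z * k * Tsum k s j
        + k ^ j * (s ^ j * a + z * (c * Ssum s j))
      = a * Ssum (s * k) (j + 1) + c * z * k * Tsum k s (j + 1) := by
    intro j
    rw [Ssum_succ, Tsum_succ]
    cases j with
    | zero => simp [Ssum_zero, Tsum_zero]
    | succ m =>
      simp only [Nat.add_sub_cancel, pow_succ, mul_pow]
      ring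
  intro j
  induction j with
  | zero =>
    have hΦ1 : Φ (u ^ 0) = 1 := by
      apply autext
      · rw [(hΦ _).1, show (1 : MulAut G) σ = σ ^ 1 from by simp]
        apply hσpow
        rw [ZMod.natCast_val, ZMod.cast_id]
        norm_num
      · exact (hΦ _).2
    rw [hΦ1]
    simp [Ssum_zero, Tsum_zero]
  | succ j ih =>
    rw [pow_succ, ih, hx]
    refine SemidirectProduct.ext ?_ ?_
    · -- left component
      show _ * (MonoidHom.id (MulAut G)) _ _ = _
      simp only [MonoidHom.id_apply, MulAut.mul_apply]
      rw [map_mul, hΦσpow, (hΦ (u ^ j)).2, map_mul, hθpσpow, hθpτ]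
      rw [← mul_assoc (σ ^ ((((u ^ j : (ZMod e)ˣ) : ZMod e)).val * a)), ← pow_add,
        ← mul_assoc, mul_assoc (σ ^ (a * Ssum (s * k) j + c * z * k * Tsum k s j)),
        hτjσ, ← mul_assoc, ← pow_add, mul_assoc, ← pow_succ]
      congr 1
      rw [← hkey j]
      apply hσpow
      push_cast
      rw [hvcast j]
    · -- right component
      show (θ ^ (c * Ssum s j) * Φ (u ^ j)) * (θ ^ c * Φ u) = _
      apply autext
      · simp only [MulAut.mul_apply]
        rw [(hΦ u).1, hθpσpow, hΦσpow, hθpσpow, (hΦ (u ^ (j + 1))).1, hθpσpow]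
        apply hσpow
        push_cast
        rw [hvcast j, hvcast (j + 1), ← hs]
        ring
      · simp only [MulAut.mul_apply]
        rw [(hΦ u).2, hθpτ, map_mul, hΦσpow, (hΦ (u ^ j)).2, map_mul, hθpσpow, hθpτ,
          (hΦ (u ^ (j + 1))).2, hθpτ, ← mul_assoc, ← pow_add]
        congr 1
        apply hσpow
        rw [Ssum_succ]
        push_cast
        rw [hvcast j]
        ring
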